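/- Schur's Pfaffian identity: for any real numbers x_1,...,x_{2k} with x_a + x_b ≠ 0 for all a,b, the Pfaffian of the 2k×2k skew-symmetric matrix with entries (x_a - x_b)/(x_a + x_b) equals the product over 1 ≤ a < b ≤ 2k of (x_a - x_b)/(x_a + x_b). -/

import Mathlib

open Finset Equiv Equiv.Perm

namespace SchurAux

noncomputable def ent (s t : ℝ) : ℝ := (s - t) / (s + t)

lemma ent_antisymm (s t : ℝ) : ent s t = - ent t s := by
  unfold ent
  rw [add_comm t s, ← neg_div, neg_sub]

lemma ent_ne_zero {s t : ℝ} (h1 : s ≠ t) (h2 : s + t ≠ 0) : ent s t ≠ 0 :=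
  div_ne_zero (sub_ne_zero.mpr h1) h2

lemma ent_eq {s t : ℝ} (h2 : s + t ≠ 0) : ent s t = 1 - 2 * t / (s + t) := by
  unfold ent; field_simp; ring

lemma inv_ent (s t : ℝ) : (ent s t)⁻¹ = (s + t) / (s - t) := by
  unfold ent; rw [inv_div]

noncomputable def Ssum (k : ℕ) (x : Fin (2 * k) → ℝ) : ℝ :=
  ∑ σ : Perm (Fin (2 * k)), ((Perm.sign σ : ℤ) : ℝ) *
    ∏ i : Fin k,
      ent (x (σ ⟨2 * (i : ℕ), by have := i.isLt; omega⟩))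
          (x (σ ⟨2 * (i : ℕ) + 1, by have := i.isLt; omega⟩))

noncomputable def PP {n : ℕ} (x : Fin n → ℝ) (S : Finset (Fin n)) : ℝ :=
  ∏ a ∈ S, ∏ b ∈ S.filter (a < ·), ent (x a) (x b)

/-! ### The partial fraction identity -/

lemma idI {n : ℕ} (x : Fin n → ℝ) :
    ∀ S : Finset (Fin n), (∀ a ∈ S, ∀ b ∈ S, a ≠ b → x a ≠ x b) →
      ∀ t : ℝ, (∀ c ∈ S, t + x c ≠ 0) →
      ∏ c ∈ S, (t - x c) / (t + x c)
        = 1 + ∑ b ∈ S, (-2 * x b / (t + x b)) *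
            ∏ c ∈ S.erase b, (x b + x c) / (x b - x c) := by
  intro S
  induction S using Finset.induction_on with
  | empty => intro _ t _; simp
  | @insert a s ha ih =>
    intro hinj t ht
    have hinjs : ∀ a' ∈ s, ∀ b ∈ s, a' ≠ b → x a' ≠ x b := fun a' ha' b hb hne =>
      hinj a' (Finset.mem_insert_of_mem ha') b (Finset.mem_insert_of_mem hb) hne
    have hts : ∀ c ∈ s, t + x c ≠ 0 := fun c hc => ht c (Finset.mem_insert_of_mem hc)
    have hta : t + x a ≠ 0 := ht a (Finset.mem_insert_self a s)
    have hax : ∀ c ∈ s, x a ≠ x c := fun c hc =>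
      hinj a (Finset.mem_insert_self a s) c (Finset.mem_insert_of_mem hc)
        (by rintro rfl; exact ha hc)
    have hneg : ∀ c ∈ s, -x a + x c ≠ 0 := by
      intro c hc h
      exact hax c hc (by linarith)
    have IH1 := ih hinjs t hts
    have IH2 := ih hinjs (-x a) hneg
    have IH2' : ∏ c ∈ s, (x a + x c) / (x a - x c)
        = 1 + ∑ b ∈ s, (2 * x b / (x a - x b)) * ∏ c ∈ s.erase b, (x b + x c) / (x b - x c) := by
      have e1 : ∀ c ∈ s, (-x a - x c) / (-x a + x c) = (x a + x c) / (x a - x c) := by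
        intro c hc
        rw [show -x a - x c = -(x a + x c) by ring, show -x a + x c = -(x a - x c) by ring,
          neg_div_neg_eq]
      rw [← Finset.prod_congr rfl e1, IH2]
      congr 1
      refine Finset.sum_congr rfl fun b hb => ?_
      rw [show -x a + x b = -(x a - x b) by ring, div_neg]
      ring
    rw [Finset.prod_insert ha, IH1, Finset.sum_insert ha, Finset.erase_insert ha, IH2']
    have hsum2 : ∑ b ∈ s, (-2 * x b / (t + x b)) *
          ∏ c ∈ (insert a s).erase b, (x b + x c) / (x b - x c)
        = ∑ b ∈ s, (-2 * x b / (t + x b)) *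
          ((x b + x a) / (x b - x a) * ∏ c ∈ s.erase b, (x b + x c) / (x b - x c)) := by
      refine Finset.sum_congr rfl fun b hb => ?_
      rw [Finset.erase_insert_of_ne (by rintro rfl; exact ha hb),
        Finset.prod_insert (fun h => ha (Finset.mem_of_mem_erase h))]
    rw [hsum2]
    have hconst : (t - x a) / (t + x a) = 1 + (-2 * x a / (t + x a)) := by
      field_simp
      ring
    have hsum : (t - x a) / (t + x a) * (∑ b ∈ s, (-2 * x b / (t + x b)) *
          ∏ c ∈ s.erase b, (x b + x c) / (x b - x c))
        = (-2 * x a / (t + x a)) * (∑ b ∈ s, (2 * x b / (x a - x b)) *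
            ∏ c ∈ s.erase b, (x b + x c) / (x b - x c))
          + ∑ b ∈ s, (-2 * x b / (t + x b)) *
            ((x b + x a) / (x b - x a) * ∏ c ∈ s.erase b, (x b + x c) / (x b - x c)) := by
      rw [Finset.mul_sum, Finset.mul_sum, ← Finset.sum_add_distrib]
      refine Finset.sum_congr rfl fun b hb => ?_
      have h1 : t + x b ≠ 0 := hts b hb
      have h2 : x a - x b ≠ 0 := sub_ne_zero.mpr (hax b hb)
      have h3 : x b - x a ≠ 0 := sub_ne_zero.mpr (Ne.symm (hax b hb))
      have key : (t - x a) / (t + x a) * (-2 * x b / (t + x b))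
          = (-2 * x a / (t + x a)) * (2 * x b / (x a - x b))
            + (-2 * x b / (t + x b)) * ((x b + x a) / (x b - x a)) := by
        field_simp
        ring
      linear_combination (∏ c ∈ s.erase b, (x b + x c) / (x b - x c)) * key
    linear_combination hconst + hsum

/-! ### Pair-product manipulation -/

lemma PP_erase {n : ℕ} (x : Fin n → ℝ) (S : Finset (Fin n)) {b : Fin n} (hb : b ∈ S) :
    PP x S = (-1) ^ #(S.filter (· < b)) * (∏ c ∈ S.erase b, ent (x b) (x c)) *
      PP x (S.erase b) := by
  classical
  set E := S.erase b with hE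
  have hSE : S = insert b E := (Finset.insert_erase hb).symm
  have hbE : b ∉ E := Finset.notMem_erase b S
  rw [PP, ← Finset.mul_prod_erase S _ hb]
  have hf1 : S.filter (b < ·) = E.filter (b < ·) := by
    rw [hE, Finset.filter_erase, Finset.erase_eq_of_notMem]
    simp
  have key : ∀ a ∈ E, ∏ c ∈ S.filter (a < ·), ent (x a) (x c)
      = (if a < b then ent (x a) (x b) else 1) * ∏ c ∈ E.filter (a < ·), ent (x a) (x c) := by
    intro a _
    rw [hSE, Finset.filter_insert]
    by_cases hab : a < b
    · rw [if_pos hab, if_pos hab, Finset.prod_insert (by simp [Finset.mem_filter, hbE])]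
    · rw [if_neg hab, if_neg hab, one_mul]
  rw [Finset.prod_congr rfl key, Finset.prod_mul_distrib]
  have hsplit : ∏ a ∈ E, (if a < b then ent (x a) (x b) else 1)
      = ∏ a ∈ E.filter (· < b), ent (x a) (x b) := (Finset.prod_filter _ _).symm
  have hneg : ∏ a ∈ E.filter (· < b), ent (x a) (x b)
      = (-1 : ℝ) ^ #(E.filter (· < b)) * ∏ a ∈ E.filter (· < b), ent (x b) (x a) := by
    rw [← Finset.prod_const, ← Finset.prod_mul_distrib]
    exact Finset.prod_congr rfl fun a _ => by rw [ent_antisymm (x a) (x b)]; ring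
  have hnotlt : E.filter (fun c => ¬ b < c) = E.filter (· < b) := by
    apply Finset.filter_congr
    intro c hc
    have hcb : c ≠ b := Finset.ne_of_mem_erase hc
    simp only [not_lt]
    exact ⟨fun h => lt_of_le_of_ne h hcb, le_of_lt⟩
  have hcomb : (∏ c ∈ E.filter (b < ·), ent (x b) (x c)) *
        ∏ a ∈ E.filter (· < b), ent (x b) (x a)
      = ∏ c ∈ E, ent (x b) (x c) := by
    rw [← hnotlt]
    exact Finset.prod_filter_mul_prod_filter_not E _ _
  have hcount : S.filter (· < b) = E.filter (· < b) := by
    rw [hE, Finset.filter_erase, Finset.erase_eq_of_notMem]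
    simp
  rw [hf1, hsplit, hneg, hcount, PP, ← hcomb]
  ring

lemma prod_pairs_comp {M N : ℕ} (G : Fin N → Fin N → ℝ) (e : Fin M → Fin N)
    (he : StrictMono e) :
    ∏ a ∈ univ.image e, ∏ b ∈ (univ.image e).filter (a < ·), G a b
      = ∏ i : Fin M, ∏ j ∈ univ.filter (i < ·), G (e i) (e j) := by
  rw [Finset.prod_image (fun a _ b _ h => he.injective h)]
  refine Finset.prod_congr rfl fun i _ => ?_
  have himg : (univ.image e).filter (e i < ·) = (univ.filter (i < ·)).image e := by
    ext b
    simp only [Finset.mem_filter, Finset.mem_image, Finset.mem_univ, true_and]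
    constructor
    · rintro ⟨⟨j, rfl⟩, hlt⟩
      exact ⟨j, he.lt_iff_lt.mp hlt, rfl⟩
    · rintro ⟨j, hj, rfl⟩
      exact ⟨⟨j, rfl⟩, he hj⟩
  rw [himg, Finset.prod_image (fun a _ b _ h => he.injective h)]

lemma image_succAbove {N : ℕ} (p : Fin (N + 1)) :
    (univ : Finset (Fin N)).image p.succAbove = univ.erase p := by
  ext b
  simp [Finset.mem_image, Finset.mem_erase, Fin.exists_succAbove_eq_iff]

lemma image_double {N : ℕ} (p : Fin (N + 2)) (q : Fin (N + 1)) :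
    (univ : Finset (Fin N)).image (fun j => p.succAbove (q.succAbove j))
      = (univ.erase p).erase (p.succAbove q) := by
  have h1 : (univ : Finset (Fin N)).image (fun j => p.succAbove (q.succAbove j))
      = ((univ : Finset (Fin N)).image q.succAbove).image p.succAbove := by
    rw [Finset.image_image]
    rfl
  rw [h1, image_succAbove, Finset.image_erase Fin.succAbove_right_injective,
    image_succAbove, Finset.erase_right_comm]

lemma card_filter_lt_univ {N : ℕ} (b : Fin N) :
    #((univ : Finset (Fin N)).filter (· < b)) = (b : ℕ) := by
  have h : (univ : Finset (Fin N)).filter (· < b) = Finset.Iio b := by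
    ext c
    simp [Finset.mem_Iio]
  rw [h, Fin.card_Iio]

lemma card_filter_lt_erase {N : ℕ} (p : Fin (N + 1)) (q : Fin N) :
    #(((univ : Finset (Fin (N + 1))).erase p).filter (· < p.succAbove q)) = (q : ℕ) := by
  rw [Finset.filter_erase]
  rcases lt_or_ge (q.castSucc) p with h | h
  · rw [Fin.succAbove_of_castSucc_lt _ _ h, Finset.erase_eq_of_notMem, card_filter_lt_univ,
      Fin.coe_castSucc]
    simp only [Finset.mem_filter, Finset.mem_univ, true_and]
    exact fun hlt => absurd (hlt.trans h) (lt_irrefl p)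
  · rw [Fin.succAbove_of_le_castSucc _ _ h, Finset.card_erase_of_mem, card_filter_lt_univ,
      Fin.val_succ]
    · simp
    · simp only [Finset.mem_filter, Finset.mem_univ, true_and]
      exact lt_of_le_of_lt h (Fin.castSucc_lt_succ (i := q))

/-! ### Scalar identity and single-row expansion -/

lemma scalar_id {n : ℕ} (x : Fin n → ℝ) (hx : ∀ a b, x a + x b ≠ 0)
    (hinj : Function.Injective x) (T : Finset (Fin n)) (hodd : Odd T.card) (p : Fin n) :
    ∑ b ∈ T, ent (x p) (x b) * ∏ c ∈ T.erase b, (x b + x c) / (x b - x c)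
      = ∏ c ∈ T, ent (x p) (x c) := by
  have hxc : ∀ c : Fin n, x c ≠ 0 := fun c h => hx c c (by rw [h]; ring)
  have hinjT : ∀ a ∈ T, ∀ b ∈ T, a ≠ b → x a ≠ x b := fun a _ b _ h e => h (hinj e)
  have hI1 := idI x T hinjT (x p) (fun c _ => hx p c)
  have hI0 := idI x T hinjT 0 (fun c _ => by simpa using hxc c)
  have hQ1 : ∑ b ∈ T, ∏ c ∈ T.erase b, (x b + x c) / (x b - x c) = 1 := by
    have hL : ∏ c ∈ T, ((0 : ℝ) - x c) / (0 + x c) = (-1 : ℝ) ^ T.card := by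
      rw [← Finset.prod_const]
      refine Finset.prod_congr rfl fun c _ => ?_
      rw [zero_sub, zero_add, neg_div, div_self (hxc c)]
    rw [hL, hodd.neg_one_pow] at hI0
    have hR : ∑ b ∈ T, (-2 * x b / (0 + x b)) * ∏ c ∈ T.erase b, (x b + x c) / (x b - x c)
        = (-2) * ∑ b ∈ T, ∏ c ∈ T.erase b, (x b + x c) / (x b - x c) := by
      rw [Finset.mul_sum]
      refine Finset.sum_congr rfl fun b _ => ?_
      rw [zero_add, mul_div_assoc, div_self (hxc b), mul_one]
    rw [hR] at hI0
    linarith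
  calc ∑ b ∈ T, ent (x p) (x b) * ∏ c ∈ T.erase b, (x b + x c) / (x b - x c)
      = ∑ b ∈ T, ((∏ c ∈ T.erase b, (x b + x c) / (x b - x c))
          + (-2 * x b / (x p + x b)) * ∏ c ∈ T.erase b, (x b + x c) / (x b - x c)) := by
        refine Finset.sum_congr rfl fun b _ => ?_
        rw [ent_eq (hx p b)]
        ring
    _ = 1 + ∑ b ∈ T, (-2 * x b / (x p + x b)) * ∏ c ∈ T.erase b, (x b + x c) / (x b - x c) := by
        rw [Finset.sum_add_distrib, hQ1]
    _ = ∏ c ∈ T, ent (x p) (x c) := by rw [← hI1]; rfl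

lemma odd_card_erase {m : ℕ} (p : Fin (2 * m + 2)) :
    Odd ((univ : Finset (Fin (2 * m + 2))).erase p).card := by
  rw [Finset.card_erase_of_mem (mem_univ p), Finset.card_univ, Fintype.card_fin]
  exact ⟨m, by omega⟩

lemma SRE {m : ℕ} (x : Fin (2 * m + 2) → ℝ) (hx : ∀ a b, x a + x b ≠ 0)
    (hinj : Function.Injective x) (p : Fin (2 * m + 2)) :
    ∑ q' : Fin (2 * m + 1), (-1 : ℝ) ^ (q' : ℕ) * ent (x p) (x (p.succAbove q')) *
        PP x ((univ.erase p).erase (p.succAbove q'))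
      = (-1 : ℝ) ^ (p : ℕ) * PP x univ := by
  classical
  have hconv : ∑ q' : Fin (2 * m + 1), (-1 : ℝ) ^ (q' : ℕ) * ent (x p) (x (p.succAbove q')) *
        PP x ((univ.erase p).erase (p.succAbove q'))
      = ∑ b ∈ univ.erase p, (-1 : ℝ) ^ #((univ.erase p).filter (· < b)) * ent (x p) (x b) *
          PP x ((univ.erase p).erase b) := by
    refine Finset.sum_bij (fun q' _ => p.succAbove q') ?_ ?_ ?_ ?_
    · exact fun q' _ => Finset.mem_erase.mpr ⟨Fin.succAbove_ne p q', mem_univ _⟩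
    · exact fun a _ b _ h => Fin.succAbove_right_injective h
    · intro b hb
      obtain ⟨z, hz⟩ := Fin.exists_succAbove_eq (Finset.ne_of_mem_erase hb)
      exact ⟨z, mem_univ z, hz⟩
    · intro q' _
      rw [card_filter_lt_erase]
  rw [hconv]
  have hTerm : ∀ b ∈ univ.erase p,
      PP x (univ.erase p) = (-1) ^ #((univ.erase p).filter (· < b)) *
        (∏ c ∈ (univ.erase p).erase b, ent (x b) (x c)) * PP x ((univ.erase p).erase b) :=
    fun b hb => PP_erase x _ hb
  have hprodne : ∀ b ∈ univ.erase p, (∏ c ∈ (univ.erase p).erase b, ent (x b) (x c)) ≠ 0 := by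
    intro b _
    refine Finset.prod_ne_zero_iff.mpr fun c hc => ent_ne_zero ?_ (hx b c)
    exact fun h => (Finset.ne_of_mem_erase hc).symm (hinj h)
  have key : ∀ b ∈ univ.erase p,
      (-1 : ℝ) ^ #((univ.erase p).filter (· < b)) * ent (x p) (x b) * PP x ((univ.erase p).erase b)
        = ent (x p) (x b) * (∏ c ∈ (univ.erase p).erase b, (x b + x c) / (x b - x c)) *
            PP x (univ.erase p) := by
    intro b hb
    have hinvE : ∏ c ∈ (univ.erase p).erase b, (x b + x c) / (x b - x c)
        = (∏ c ∈ (univ.erase p).erase b, ent (x b) (x c))⁻¹ := by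
      rw [← Finset.prod_inv_distrib]
      exact Finset.prod_congr rfl fun c _ => (inv_ent _ _).symm
    rw [hinvE, hTerm b hb]
    have hE := hprodne b hb
    field_simp
  rw [Finset.sum_congr rfl key, ← Finset.sum_mul]
  have hsc := scalar_id x hx hinj (univ.erase p) (odd_card_erase p) p
  have hsum2 : ∑ b ∈ univ.erase p, ent (x p) (x b) *
        ∏ c ∈ (univ.erase p).erase b, (x b + x c) / (x b - x c)
      = ∏ c ∈ univ.erase p, ent (x p) (x c) := hsc
  have hmulform : ∑ b ∈ univ.erase p, ent (x p) (x b) *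
        (∏ c ∈ (univ.erase p).erase b, (x b + x c) / (x b - x c))
      = ∏ c ∈ univ.erase p, ent (x p) (x c) := hsum2
  rw [hmulform]
  have hPPuniv : PP x univ = (-1 : ℝ) ^ (p : ℕ) *
      (∏ c ∈ univ.erase p, ent (x p) (x c)) * PP x (univ.erase p) := by
    have h := PP_erase x univ (mem_univ p)
    rwa [card_filter_lt_univ] at h
  rw [hPPuniv]
  have h11 : (-1 : ℝ) ^ (p : ℕ) * (-1 : ℝ) ^ (p : ℕ) = 1 := by
    rw [← mul_pow]
    norm_num
  linear_combination (-((∏ c ∈ univ.erase p, ent (x p) (x c)) * PP x (univ.erase p))) * h11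

/-! ### Permutation decomposition -/

noncomputable def Ψ {N : ℕ} (p : Fin (N + 1)) (ρ : Perm (Fin N)) : Perm (Fin (N + 1)) :=
  (Fin.cycleRange p)⁻¹ * Equiv.Perm.decomposeFin.symm (0, ρ)

lemma Ψ_zero {N : ℕ} (p : Fin (N + 1)) (ρ : Perm (Fin N)) : Ψ p ρ 0 = p := by
  simp [Ψ, Equiv.Perm.mul_apply, Equiv.Perm.inv_def, Fin.cycleRange_symm_zero]

lemma Ψ_succ {N : ℕ} (p : Fin (N + 1)) (ρ : Perm (Fin N)) (j : Fin N) :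
    Ψ p ρ j.succ = p.succAbove (ρ j) := by
  simp [Ψ, Equiv.Perm.mul_apply, Equiv.Perm.decomposeFin_symm_apply_succ,
    Equiv.Perm.inv_def, Fin.cycleRange_symm_succ]

lemma Ψ_sign {N : ℕ} (p : Fin (N + 1)) (ρ : Perm (Fin N)) :
    Perm.sign (Ψ p ρ) = (-1) ^ (p : ℕ) * Perm.sign ρ := by
  rw [Ψ, map_mul, Equiv.Perm.sign_inv, Fin.sign_cycleRange,
    Equiv.Perm.decomposeFin.symm_sign]
  simp

lemma Ψ_bij {N : ℕ} :
    Function.Bijective (fun pr : Fin (N + 1) × Perm (Fin N) => Ψ pr.1 pr.2) := by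
  rw [Fintype.bijective_iff_injective_and_card]
  constructor
  · rintro ⟨p, ρ⟩ ⟨p', ρ'⟩ h
    simp only at h
    have hp : p = p' := by
      have h0 := congrArg (fun σ : Perm (Fin (N + 1)) => σ 0) h
      simpa [Ψ_zero] using h0
    subst hp
    have h2 : Equiv.Perm.decomposeFin.symm (0, ρ) = Equiv.Perm.decomposeFin.symm (0, ρ') :=
      mul_left_cancel h
    have h3 := Equiv.injective _ h2
    simp only [Prod.mk.injEq] at h3
    exact Prod.ext rfl h3.2
  · simp [Fintype.card_perm, Fintype.card_fin, Nat.factorial_succ]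

/-! ### The main induction step -/

noncomputable def Fterm (m : ℕ) (x : Fin (2 * m + 2) → ℝ) (σ : Perm (Fin (2 * m + 2))) : ℝ :=
  ((Perm.sign σ : ℤ) : ℝ) *
    ∏ i : Fin (m + 1),
      ent (x (σ ⟨2 * (i : ℕ), by have := i.isLt; omega⟩))
          (x (σ ⟨2 * (i : ℕ) + 1, by have := i.isLt; omega⟩))

lemma hEval (m : ℕ) (x : Fin (2 * m + 2) → ℝ) (p : Fin (2 * m + 2)) (q' : Fin (2 * m + 1))
    (τ : Perm (Fin (2 * m))) :
    Fterm m x (Ψ p (Ψ q' τ))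
      = (-1 : ℝ) ^ ((p : ℕ) + (q' : ℕ)) * ent (x p) (x (p.succAbove q')) *
        (((Perm.sign τ : ℤ) : ℝ) *
          ∏ i : Fin m,
            ent (x (p.succAbove (q'.succAbove (τ ⟨2 * (i : ℕ), by have := i.isLt; omega⟩))))
                (x (p.succAbove (q'.succAbove (τ ⟨2 * (i : ℕ) + 1, by have := i.isLt; omega⟩))))) := by
  rw [Fterm]
  have hsgn : ((Perm.sign (Ψ p (Ψ q' τ)) : ℤ) : ℝ)
      = (-1 : ℝ) ^ ((p : ℕ) + (q' : ℕ)) * ((Perm.sign τ : ℤ) : ℝ) := by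
    rw [Ψ_sign, Ψ_sign]
    push_cast [pow_add]
    ring
  have hprod : (∏ i : Fin (m + 1),
        ent (x ((Ψ p (Ψ q' τ)) ⟨2 * (i : ℕ), by have := i.isLt; omega⟩))
            (x ((Ψ p (Ψ q' τ)) ⟨2 * (i : ℕ) + 1, by have := i.isLt; omega⟩)))
      = ent (x p) (x (p.succAbove q')) *
        ∏ i : Fin m,
          ent (x (p.succAbove (q'.succAbove (τ ⟨2 * (i : ℕ), by have := i.isLt; omega⟩))))
              (x (p.succAbove (q'.succAbove (τ ⟨2 * (i : ℕ) + 1, by have := i.isLt; omega⟩)))) := by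
    rw [Fin.prod_univ_succ]
    congr 1
    · have i0 : (⟨2 * ((0 : Fin (m + 1)) : ℕ), by simp⟩ : Fin (2 * m + 2)) = 0 := by
        ext
        simp
      have i1 : (⟨2 * ((0 : Fin (m + 1)) : ℕ) + 1, by simp⟩ : Fin (2 * m + 2)) = 1 := by
        ext
        simp
      rw [i0, i1, Ψ_zero, ← Fin.succ_zero_eq_one, Ψ_succ, Ψ_zero]
    · refine Finset.prod_congr rfl fun i _ => ?_
      have i2 : (⟨2 * ((i.succ : Fin (m + 1)) : ℕ), by have := i.isLt; omega⟩ : Fin (2 * m + 2))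
          = ((⟨2 * (i : ℕ), by have := i.isLt; omega⟩ : Fin (2 * m)).succ.succ) := by
        ext
        simp [Fin.val_succ]
        ring
      have i3 : (⟨2 * ((i.succ : Fin (m + 1)) : ℕ) + 1, by have := i.isLt; omega⟩ :
            Fin (2 * m + 2))
          = ((⟨2 * (i : ℕ) + 1, by have := i.isLt; omega⟩ : Fin (2 * m)).succ.succ) := by
        ext
        simp [Fin.val_succ]
        ring
      rw [i2, i3]
      simp only [Ψ_succ]
  rw [hsgn, hprod]
  ring

lemma step' (m : ℕ)
    (ih : ∀ y : Fin (2 * m) → ℝ, (∀ a b, y a + y b ≠ 0) → Function.Injective y →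
      Ssum m y = 2 ^ m * (m.factorial : ℝ) * PP y univ)
    (x : Fin (2 * m + 2) → ℝ) (hx : ∀ a b, x a + x b ≠ 0) (hinj : Function.Injective x) :
    (∑ σ : Perm (Fin (2 * m + 2)), Fterm m x σ)
      = 2 ^ (m + 1) * ((m + 1).factorial : ℝ) * PP x univ := by
  classical
  have step5 : ∀ (p : Fin (2 * m + 2)) (q' : Fin (2 * m + 1)),
      ∑ τ : Perm (Fin (2 * m)), Fterm m x (Ψ p (Ψ q' τ))
        = (-1 : ℝ) ^ ((p : ℕ) + (q' : ℕ)) * ent (x p) (x (p.succAbove q')) *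
          (2 ^ m * (m.factorial : ℝ) * PP x ((univ.erase p).erase (p.succAbove q'))) := by
    intro p q'
    have hy : ∀ a b : Fin (2 * m),
        x (p.succAbove (q'.succAbove a)) + x (p.succAbove (q'.succAbove b)) ≠ 0 :=
      fun a b => hx _ _
    have hyinj : Function.Injective (fun j : Fin (2 * m) => x (p.succAbove (q'.succAbove j))) :=
      fun j1 j2 h => Fin.succAbove_right_injective (Fin.succAbove_right_injective (hinj h))
    have hSs := ih (fun j => x (p.succAbove (q'.succAbove j))) hy hyinj
    have hPPy : PP (fun j : Fin (2 * m) => x (p.succAbove (q'.succAbove j))) univ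
        = PP x ((univ.erase p).erase (p.succAbove q')) := by
      rw [PP, PP, ← image_double p q']
      exact (prod_pairs_comp (fun a b => ent (x a) (x b))
        (fun j => p.succAbove (q'.succAbove j))
        ((Fin.strictMono_succAbove p).comp (Fin.strictMono_succAbove q'))).symm
    calc ∑ τ : Perm (Fin (2 * m)), Fterm m x (Ψ p (Ψ q' τ))
        = ∑ τ : Perm (Fin (2 * m)), (-1 : ℝ) ^ ((p : ℕ) + (q' : ℕ)) *
            ent (x p) (x (p.succAbove q')) *
            (((Perm.sign τ : ℤ) : ℝ) *
              ∏ i : Fin m,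
                ent (x (p.succAbove (q'.succAbove (τ ⟨2 * (i : ℕ), by have := i.isLt; omega⟩))))
                    (x (p.succAbove (q'.succAbove
                      (τ ⟨2 * (i : ℕ) + 1, by have := i.isLt; omega⟩))))) :=
          Finset.sum_congr rfl fun τ _ => hEval m x p q' τ
      _ = (-1 : ℝ) ^ ((p : ℕ) + (q' : ℕ)) * ent (x p) (x (p.succAbove q')) *
            Ssum m (fun j => x (p.succAbove (q'.succAbove j))) := by
          rw [← Finset.mul_sum]
          rfl
      _ = (-1 : ℝ) ^ ((p : ℕ) + (q' : ℕ)) * ent (x p) (x (p.succAbove q')) *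
          (2 ^ m * (m.factorial : ℝ) * PP x ((univ.erase p).erase (p.succAbove q'))) := by
          rw [hSs, hPPy]
  calc (∑ σ : Perm (Fin (2 * m + 2)), Fterm m x σ)
      = ∑ pr : Fin (2 * m + 2) × Perm (Fin (2 * m + 1)), Fterm m x (Ψ pr.1 pr.2) :=
        (Function.Bijective.sum_comp Ψ_bij (Fterm m x)).symm
    _ = ∑ p : Fin (2 * m + 2), ∑ ρ : Perm (Fin (2 * m + 1)), Fterm m x (Ψ p ρ) :=
        Fintype.sum_prod_type _
    _ = ∑ p : Fin (2 * m + 2), ∑ qτ : Fin (2 * m + 1) × Perm (Fin (2 * m)),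
          Fterm m x (Ψ p (Ψ qτ.1 qτ.2)) :=
        Finset.sum_congr rfl fun p _ =>
          (Function.Bijective.sum_comp Ψ_bij fun ρ => Fterm m x (Ψ p ρ)).symm
    _ = ∑ p : Fin (2 * m + 2), ∑ q' : Fin (2 * m + 1), ∑ τ : Perm (Fin (2 * m)),
          Fterm m x (Ψ p (Ψ q' τ)) :=
        Finset.sum_congr rfl fun p _ => Fintype.sum_prod_type _
    _ = ∑ p : Fin (2 * m + 2), ∑ q' : Fin (2 * m + 1),
          (-1 : ℝ) ^ ((p : ℕ) + (q' : ℕ)) * ent (x p) (x (p.succAbove q')) *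
            (2 ^ m * (m.factorial : ℝ) * PP x ((univ.erase p).erase (p.succAbove q'))) :=
        Finset.sum_congr rfl fun p _ => Finset.sum_congr rfl fun q' _ => step5 p q'
    _ = 2 ^ m * (m.factorial : ℝ) * ∑ p : Fin (2 * m + 2), ((-1 : ℝ) ^ (p : ℕ) *
          ∑ q' : Fin (2 * m + 1), (-1 : ℝ) ^ (q' : ℕ) * ent (x p) (x (p.succAbove q')) *
            PP x ((univ.erase p).erase (p.succAbove q'))) := by
        rw [Finset.mul_sum]
        refine Finset.sum_congr rfl fun p _ => ?_
        rw [Finset.mul_sum, Finset.mul_sum]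
        refine Finset.sum_congr rfl fun q' _ => ?_
        rw [pow_add]
        ring
    _ = 2 ^ m * (m.factorial : ℝ) * ∑ p : Fin (2 * m + 2),
          ((-1 : ℝ) ^ (p : ℕ) * ((-1 : ℝ) ^ (p : ℕ) * PP x univ)) := by
        refine congrArg _ (Finset.sum_congr rfl fun p _ => ?_)
        rw [SRE x hx hinj p]
    _ = 2 ^ m * (m.factorial : ℝ) * ∑ _p : Fin (2 * m + 2), PP x univ := by
        refine congrArg _ (Finset.sum_congr rfl fun p _ => ?_)
        rw [← mul_assoc, ← mul_pow]
        norm_num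
    _ = 2 ^ (m + 1) * ((m + 1).factorial : ℝ) * PP x univ := by
        rw [Finset.sum_const, Finset.card_univ, Fintype.card_fin, nsmul_eq_mul]
        push_cast [Nat.factorial_succ]
        ring

lemma main_inj : ∀ (k : ℕ) (x : Fin (2 * k) → ℝ), (∀ a b, x a + x b ≠ 0) →
    Function.Injective x →
    Ssum k x = 2 ^ k * (k.factorial : ℝ) * PP x univ := by
  intro k
  induction k with
  | zero =>
    intro x _ _
    simp [Ssum, PP]
  | succ m ih =>
    intro x hx hinj
    exact step' m ih x hx hinj

/-! ### Continuity helpers -/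

lemma caSum {ι : Type*} (s : Finset ι) (f : ι → ℝ → ℝ) (a : ℝ)
    (h : ∀ i ∈ s, ContinuousAt (f i) a) :
    ContinuousAt (fun ε => ∑ i ∈ s, f i ε) a := by
  classical
  induction s using Finset.cons_induction with
  | empty => simpa using continuousAt_const
  | cons i s hi ihs =>
    simp only [Finset.sum_cons]
    exact (h i (Finset.mem_cons_self i s)).add
      (ihs fun j hj => h j (Finset.mem_cons_of_mem hj))

lemma caProd {ι : Type*} (s : Finset ι) (f : ι → ℝ → ℝ) (a : ℝ)
    (h : ∀ i ∈ s, ContinuousAt (f i) a) :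
    ContinuousAt (fun ε => ∏ i ∈ s, f i ε) a := by
  classical
  induction s using Finset.cons_induction with
  | empty => simpa using continuousAt_const
  | cons i s hi ihs =>
    simp only [Finset.prod_cons]
    exact (h i (Finset.mem_cons_self i s)).mul
      (ihs fun j hj => h j (Finset.mem_cons_of_mem hj))

/-! ### Removing the injectivity hypothesis by a limit argument -/

lemma main_general (k : ℕ) (x : Fin (2 * k) → ℝ) (hx : ∀ a b, x a + x b ≠ 0) :
    Ssum k x = 2 ^ k * (k.factorial : ℝ) * PP x univ := by
  classical
  set X : ℝ → Fin (2 * k) → ℝ := fun ε a => x a + ε * ((a : ℕ) : ℝ) with hXdef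
  have hX0 : X 0 = x := funext fun a => by simp [hXdef]
  have hcaCoord : ∀ a : Fin (2 * k), ContinuousAt (fun ε : ℝ => X ε a) 0 := fun a =>
    continuousAt_const.add (continuousAt_id.mul continuousAt_const)
  have hcaEnt : ∀ a b : Fin (2 * k), ContinuousAt (fun ε : ℝ => ent (X ε a) (X ε b)) 0 := by
    intro a b
    have h0 : (fun ε : ℝ => X ε a + X ε b) 0 ≠ 0 := by
      simpa [hXdef] using hx a b
    exact ContinuousAt.div ((hcaCoord a).sub (hcaCoord b))
      ((hcaCoord a).add (hcaCoord b)) h0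
  have hSsum_ca : ContinuousAt (fun ε => Ssum k (X ε)) 0 := by
    refine caSum univ (fun σ ε => ((Perm.sign σ : ℤ) : ℝ) *
      ∏ i : Fin k,
        ent (X ε (σ ⟨2 * (i : ℕ), by have := i.isLt; omega⟩))
            (X ε (σ ⟨2 * (i : ℕ) + 1, by have := i.isLt; omega⟩))) 0 ?_
    intro σ _
    exact continuousAt_const.mul (caProd univ _ 0 (fun i _ => hcaEnt _ _))
  have hPP_ca : ContinuousAt (fun ε => PP (X ε) univ) 0 := by
    refine caProd univ (fun a ε => ∏ b ∈ univ.filter (a < ·), ent (X ε a) (X ε b)) 0 ?_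
    intro a _
    exact caProd _ _ 0 (fun b _ => hcaEnt a b)
  have hev : ∀ᶠ ε in nhdsWithin (0 : ℝ) {(0 : ℝ)}ᶜ,
      Ssum k (X ε) = 2 ^ k * (k.factorial : ℝ) * PP (X ε) univ := by
    have hsum_ev : ∀ᶠ ε in nhdsWithin (0 : ℝ) {(0 : ℝ)}ᶜ,
        ∀ a b : Fin (2 * k), X ε a + X ε b ≠ 0 := by
      rw [Filter.eventually_all]
      intro a
      rw [Filter.eventually_all]
      intro b
      apply Filter.Eventually.filter_mono nhdsWithin_le_nhds
      have hcab : ContinuousAt (fun ε : ℝ => X ε a + X ε b) 0 :=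
        (hcaCoord a).add (hcaCoord b)
      have h0 : (fun ε : ℝ => X ε a + X ε b) 0 ≠ 0 := by
        simpa [hXdef] using hx a b
      exact hcab.eventually_ne h0
    have hinj_ev : ∀ᶠ ε in nhdsWithin (0 : ℝ) {(0 : ℝ)}ᶜ, Function.Injective (X ε) := by
      have hpair : ∀ a b : Fin (2 * k), a ≠ b →
          ∀ᶠ ε in nhdsWithin (0 : ℝ) {(0 : ℝ)}ᶜ, X ε a ≠ X ε b := by
        intro a b hab
        have hne : ((a : ℕ) : ℝ) - ((b : ℕ) : ℝ) ≠ 0 := by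
          have hvne : (a : ℕ) ≠ (b : ℕ) := fun h => hab (Fin.ext h)
          intro h0
          exact hvne (by exact_mod_cast sub_eq_zero.mp h0)
        have hne0 : ∀ᶠ ε in nhdsWithin (0 : ℝ) {(0 : ℝ)}ᶜ,
            ε ≠ (x b - x a) / (((a : ℕ) : ℝ) - ((b : ℕ) : ℝ)) := by
          rcases eq_or_ne ((x b - x a) / (((a : ℕ) : ℝ) - ((b : ℕ) : ℝ))) 0 with h | h
          · rw [h]
            exact eventually_mem_nhdsWithin
          · exact Filter.Eventually.filter_mono nhdsWithin_le_nhds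
              (continuousAt_id.eventually_ne (Ne.symm h))
        refine hne0.mono fun ε hε hXX => hε ?_
        have hlin : ε * (((a : ℕ) : ℝ) - ((b : ℕ) : ℝ)) = x b - x a := by
          simp only [hXdef] at hXX
          linear_combination hXX
        rw [eq_div_iff hne]
        exact hlin
      have hall : ∀ᶠ ε in nhdsWithin (0 : ℝ) {(0 : ℝ)}ᶜ,
          ∀ a b : Fin (2 * k), a ≠ b → X ε a ≠ X ε b := by
        rw [Filter.eventually_all]
        intro a
        rw [Filter.eventually_all]
        intro b
        rcases eq_or_ne a b with rfl | hab
        · exact Filter.Eventually.of_forall fun ε h => absurd rfl h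
        · exact (hpair a b hab).mono fun ε h _ => h
      exact hall.mono fun ε h a b hXX => by_contra fun hne => h a b hne hXX
    refine (hsum_ev.and hinj_ev).mono fun ε hε => ?_
    exact main_inj k (X ε) hε.1 hε.2
  have t1 : Filter.Tendsto (fun ε => Ssum k (X ε)) (nhdsWithin (0 : ℝ) {(0 : ℝ)}ᶜ)
      (nhds (Ssum k x)) := by
    have h := hSsum_ca.tendsto
    rw [show X 0 = x from hX0] at h
    exact h.mono_left nhdsWithin_le_nhds
  have t2 : Filter.Tendsto (fun ε => 2 ^ k * (k.factorial : ℝ) * PP (X ε) univ)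
      (nhdsWithin (0 : ℝ) {(0 : ℝ)}ᶜ)
      (nhds (2 ^ k * (k.factorial : ℝ) * PP x univ)) := by
    have hconst : ContinuousAt (fun _ : ℝ => (2 : ℝ) ^ k * (k.factorial : ℝ)) 0 :=
      continuousAt_const
    have h := (hconst.mul hPP_ca).tendsto
    simp only [Pi.mul_def] at h
    rw [show X 0 = x from hX0] at h
    exact h.mono_left nhdsWithin_le_nhds
  have t3 : Filter.Tendsto (fun ε => Ssum k (X ε)) (nhdsWithin (0 : ℝ) {(0 : ℝ)}ᶜ)
      (nhds (2 ^ k * (k.factorial : ℝ) * PP x univ)) :=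
    Filter.Tendsto.congr' (hev.mono fun ε h => h.symm) t2
  exact tendsto_nhds_unique t1 t3

end SchurAux

/-- The Pfaffian of an `n × n` real matrix (intended for skew-symmetric matrices with
`n` even): `pf A = (1/(2^k k!)) ∑_{σ ∈ S_{2k}} sgn(σ) ∏_{i=1}^k A_{σ(2i-1), σ(2i)}`
where `k = n/2`. -/
noncomputable def pf {n : ℕ} (A : Matrix (Fin n) (Fin n) ℝ) : ℝ :=
  (1 / ((2 : ℝ) ^ (n / 2) * (Nat.factorial (n / 2) : ℝ))) *
    ∑ σ : Equiv.Perm (Fin n), ((Equiv.Perm.sign σ : ℤ) : ℝ) *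
      ∏ i : Fin (n / 2),
        A (σ ⟨2 * (i : ℕ), by have := i.isLt; omega⟩)
          (σ ⟨2 * (i : ℕ) + 1, by have := i.isLt; omega⟩)

/-- **Schur's Pfaffian identity**: for real numbers `x 1, …, x (2k)` with
`x a + x b ≠ 0` for all `a, b`, the Pfaffian of the skew-symmetric matrix with entries
`(x a - x b)/(x a + x b)` equals `∏_{a < b} (x a - x b)/(x a + x b)`. -/
theorem schur_pfaffian (k : ℕ) (x : Fin (2 * k) → ℝ)
    (hx : ∀ a b, x a + x b ≠ 0) :
    pf (Matrix.of fun a b => (x a - x b) / (x a + x b)) =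
      ∏ a : Fin (2 * k), ∏ b ∈ Finset.Ioi a, (x a - x b) / (x a + x b) := by
  classical
  open SchurAux in
  have h2 : 2 * k / 2 = k := by omega
  rw [pf]
  have hS : (∑ σ : Equiv.Perm (Fin (2 * k)), ((Equiv.Perm.sign σ : ℤ) : ℝ) *
        ∏ i : Fin (2 * k / 2),
          (Matrix.of fun a b => (x a - x b) / (x a + x b))
            (σ ⟨2 * (i : ℕ), by have := i.isLt; omega⟩)
            (σ ⟨2 * (i : ℕ) + 1, by have := i.isLt; omega⟩))
      = SchurAux.Ssum k x := by
    rw [SchurAux.Ssum]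
    refine Finset.sum_congr rfl fun σ _ => ?_
    congr 1
    have hcast := Fin.prod_congr' (fun i : Fin k =>
      SchurAux.ent (x (σ ⟨2 * (i : ℕ), by have := i.isLt; omega⟩))
        (x (σ ⟨2 * (i : ℕ) + 1, by have := i.isLt; omega⟩))) h2
    rw [← hcast]
    refine Finset.prod_congr rfl fun i _ => ?_
    have e1 : (⟨2 * ((Fin.cast h2 i : Fin k) : ℕ), by have := (Fin.cast h2 i).isLt; omega⟩ :
          Fin (2 * k)) = ⟨2 * (i : ℕ), by have := i.isLt; omega⟩ :=
      Fin.ext (by simp)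
    have e2 : (⟨2 * ((Fin.cast h2 i : Fin k) : ℕ) + 1,
          by have := (Fin.cast h2 i).isLt; omega⟩ : Fin (2 * k))
        = ⟨2 * (i : ℕ) + 1, by have := i.isLt; omega⟩ :=
      Fin.ext (by simp)
    rw [e1, e2]
    rfl
  rw [hS, SchurAux.main_general k x hx, h2]
  have hPPIoi : SchurAux.PP x Finset.univ
      = ∏ a : Fin (2 * k), ∏ b ∈ Finset.Ioi a, (x a - x b) / (x a + x b) := by
    rw [SchurAux.PP]
    refine Finset.prod_congr rfl fun a _ => ?_
    refine Finset.prod_congr ?_ fun b _ => rfl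
    ext c
    simp [Finset.mem_Ioi]
  rw [hPPIoi]
  have hne1 : (2 : ℝ) ^ k ≠ 0 := by positivity
  have hne2 : (k.factorial : ℝ) ≠ 0 := by
    exact_mod_cast Nat.factorial_ne_zero k
  field_simp
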